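/- For each positive integer n, the set of all binary partitions of n can be arranged in a list, containing each binary partition of n exactly once, such that every two consecutive partitions in the list differ by a single elementary move. -/

import Mathlib

/-- A binary partition: a multiset of parts, each a power of two. -/
def IsBinaryPartition (P : Multiset ℕ) : Prop := ∀ p ∈ P, ∃ k : ℕ, p = 2 ^ k

/-- `P` and `Q` differ by an elementary move: for some `k`, `Q` is obtained from `P`
by removing two copies of `2^k` and adding one copy of `2^(k+1)`, or vice versa. -/
def ElementaryMove (P Q : Multiset ℕ) : Prop :=
  ∃ k : ℕ, Q + {2 ^ k, 2 ^ k} = P + {2 ^ (k + 1)} ∨ P + {2 ^ k, 2 ^ k} = Q + {2 ^ (k + 1)}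

def ones (n : ℕ) : Multiset ℕ := Multiset.replicate n 1
def dbl (P : Multiset ℕ) : Multiset ℕ := P.map (2 * ·)

def G : ℕ → List (Multiset ℕ)
  | 0 => [0]
  | 1 => [{1}]
  | (n+2) =>
    ((if ((n+2)/2) % 2 = 0 then G ((n+2)/2) else (G ((n+2)/2)).reverse).map
      (fun P => ones ((n+2) % 2) + dbl P)) ++ (G n).map (fun P => {1,1} + P)
decreasing_by all_goals omega

lemma em_symm {P Q : Multiset ℕ} (h : ElementaryMove P Q) : ElementaryMove Q P := by
  obtain ⟨k, h⟩ := h; exact ⟨k, h.symm⟩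

lemma em_add (R : Multiset ℕ) {P Q : Multiset ℕ} (h : ElementaryMove P Q) :
    ElementaryMove (R + P) (R + Q) := by
  obtain ⟨k, h | h⟩ := h
  · exact ⟨k, Or.inl (by rw [add_assoc, h, ← add_assoc])⟩
  · exact ⟨k, Or.inr (by rw [add_assoc, h, ← add_assoc])⟩

lemma dbl_add (P Q : Multiset ℕ) : dbl (P + Q) = dbl P + dbl Q := Multiset.map_add _ _ _

lemma dbl_pair (k : ℕ) : dbl {2 ^ k, 2 ^ k} = {2 ^ (k+1), 2 ^ (k+1)} := by
  simp [dbl, pow_succ, mul_comm]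

lemma dbl_single (k : ℕ) : dbl {2 ^ k} = {2 ^ (k+1)} := by
  simp [dbl, pow_succ, mul_comm]

lemma em_dbl {P Q : Multiset ℕ} (h : ElementaryMove P Q) : ElementaryMove (dbl P) (dbl Q) := by
  obtain ⟨k, h | h⟩ := h
  · exact ⟨k + 1, Or.inl (by rw [← dbl_pair, ← dbl_single, ← dbl_add, ← dbl_add, h])⟩
  · exact ⟨k + 1, Or.inr (by rw [← dbl_pair, ← dbl_single, ← dbl_add, ← dbl_add, h])⟩

lemma dbl_sum (P : Multiset ℕ) : (dbl P).sum = 2 * P.sum := by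
  induction P using Multiset.induction with
  | empty => simp [dbl]
  | cons a S ih => simp [dbl] at ih ⊢; simp [ih]; ring

lemma exists_dbl (S : Multiset ℕ) (h : ∀ x ∈ S, 2 ∣ x) : ∃ Q, S = dbl Q := by
  induction S using Multiset.induction with
  | empty => exact ⟨0, rfl⟩
  | cons a S ih =>
    obtain ⟨Q, hQ⟩ := ih (fun x hx => h x (Multiset.mem_cons_of_mem hx))
    obtain ⟨b, hb⟩ := h a (Multiset.mem_cons_self a S)
    exact ⟨b ::ₘ Q, by simp [dbl, hQ, hb]⟩

lemma count_one_dbl (Q : Multiset ℕ) : (dbl Q).count 1 = 0 := by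
  rw [Multiset.count_eq_zero]
  intro h
  obtain ⟨a, _, ha⟩ := Multiset.mem_map.mp h
  omega

lemma dbl_injective : Function.Injective dbl :=
  Multiset.map_injective (fun a b h => by omega)

lemma count_one_ones (n : ℕ) : (ones n).count 1 = n := by simp [ones]

lemma sum_ones (n : ℕ) : (ones n).sum = n := by simp [ones]

lemma ones_two : ({1,1} : Multiset ℕ) = ones 2 := rfl

lemma ones_add (a b : ℕ) : ones (a + b) = ones a + ones b := by
  rw [ones, ones, ones, ← Multiset.replicate_add]

lemma ones_succ (n : ℕ) : ones (n+1) = ones n + {1} := by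
  have : ones 1 = {1} := rfl
  rw [← this, ← ones_add]

lemma eq_zero_of_powers (P : Multiset ℕ) (hb : ∀ x ∈ P, ∃ k:ℕ, x = 2^k) (h : P.sum = 0) :
    P = 0 := by
  rw [Multiset.sum_eq_zero_iff] at h
  rw [Multiset.eq_zero_iff_forall_notMem]
  intro x hx
  obtain ⟨k, hk⟩ := hb x hx
  have := h x hx
  have : (0:ℕ) < 2^k := pow_pos (by norm_num) k
  omega

lemma decomp (P : Multiset ℕ) (hP : IsBinaryPartition P) :
    ∃ Q, P = ones (P.count 1) + dbl Q ∧ (∀ x ∈ Q, ∃ k, x = 2 ^ k) ∧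
      P.sum = P.count 1 + 2 * Q.sum := by
  have hsplit := Multiset.filter_add_not (fun a => 1 = a) P
  have h1 : Multiset.filter (fun a => 1 = a) P = ones (P.count 1) :=
    Multiset.filter_eq P 1
  set R := Multiset.filter (fun a => ¬ 1 = a) P with hR
  have hRP : ∀ x ∈ R, x ∈ P ∧ x ≠ 1 := by
    intro x hx
    rw [hR, Multiset.mem_filter] at hx
    exact ⟨hx.1, fun h => hx.2 h.symm⟩
  have hRd : ∀ x ∈ R, 2 ∣ x := by
    intro x hx
    obtain ⟨hxP, hx1⟩ := hRP x hx
    obtain ⟨k, hk⟩ := hP x hxP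
    match k, hk with
    | 0, hk => exact absurd hk hx1
    | (k+1), hk => exact ⟨2^k, by rw [hk, pow_succ, mul_comm]⟩
  obtain ⟨Q, hQ⟩ := exists_dbl R hRd
  have hPQ : P = ones (P.count 1) + dbl Q := by
    rw [← hQ, ← h1, hsplit]
  refine ⟨Q, hPQ, ?_, ?_⟩
  · intro x hx
    have hxR : 2 * x ∈ R := by
      rw [hQ]; exact Multiset.mem_map.mpr ⟨x, hx, rfl⟩
    obtain ⟨hxP, hx1⟩ := hRP _ hxR
    obtain ⟨k, hk⟩ := hP _ hxP
    match k, hk with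
    | 0, hk => omega
    | (k+1), hk =>
      rw [pow_succ, mul_comm] at hk
      exact ⟨k, by omega⟩
  · conv_lhs => rw [hPQ]
    rw [Multiset.sum_add, sum_ones, dbl_sum]

lemma em_junction (A B : Multiset ℕ) :
    ElementaryMove (A + (B + {2})) ({1,1} + (A + B)) := by
  refine ⟨0, Or.inr ?_⟩
  have e1 : ({2^0, 2^0} : Multiset ℕ) = {1,1} := by norm_num
  have e2 : ({2^(0+1)} : Multiset ℕ) = {2} := by norm_num
  rw [e1, e2]
  abel

theorem G_spec (n : ℕ) :
    G n ≠ [] ∧ (G n).getLast? = some (ones n) ∧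
    (∀ P, P ∈ G n ↔ P.sum = n ∧ IsBinaryPartition P) ∧
    (G n).Nodup ∧ (G n).Chain' ElementaryMove ∧
    ∃ h, (if n / 2 % 2 = 0 then (G (n/2)).head? else (G (n/2)).getLast?) = some h ∧
      (G n).head? = some (ones (n % 2) + dbl h) := by
  induction n using Nat.strong_induction_on with
  | _ n ih =>
  match n with
  | 0 =>
    refine ⟨by simp [G], by simp [G]; rfl, ?_, by simp [G], by simp [G]; exact List.isChain_singleton _, 0, by simp [G], ?_⟩
    · intro P
      simp only [G, List.mem_singleton]
      constructor
      · rintro rfl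
        exact ⟨rfl, fun p hp => absurd hp (Multiset.notMem_zero p)⟩
      · rintro ⟨hs, hb⟩
        exact eq_zero_of_powers P hb hs
    · simp [G]; rfl
  | 1 =>
    refine ⟨by simp [G], by simp [G]; rfl, ?_, by simp [G], by simp [G]; exact List.isChain_singleton _, 0, by simp [G], ?_⟩
    · intro P
      simp only [G, List.mem_singleton]
      constructor
      · rintro rfl
        exact ⟨rfl, fun p hp => ⟨0, by simpa using hp⟩⟩
      · rintro ⟨hs, hb⟩
        obtain ⟨Q, hPQ, hQb, hsum⟩ := decomp P hb
        have hc : P.count 1 + 2 * Q.sum = 1 := by rw [← hsum]; exact hs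
        have hc1 : P.count 1 = 1 := by omega
        have hQ0 : Q = 0 := eq_zero_of_powers Q hQb (by omega)
        have : ones (P.count 1) + dbl Q = {1} := by
          rw [hc1, hQ0]
          simp [ones, dbl]
        exact hPQ.trans this
    · simp [G]; rfl
  | (k+2) =>
    obtain ⟨hne_m, hlast_m, hmem_m, hnd_m, hch_m, hm, hifm, hheadm⟩ :=
      ih ((k+2)/2) (by omega)
    obtain ⟨hne_m1, hlast_m1, hmem_m1, hnd_m1, hch_m1, hm1, hifm1, hheadm1⟩ :=
      ih ((k+2)/2 - 1) (by omega)
    obtain ⟨hne_k, hlast_k, hmem_k, hnd_k, hch_k, hk', hifk, hheadk⟩ :=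
      ih k (by omega)
    set m := (k+2)/2 with hmdef
    set r := (k+2) % 2 with hrdef
    have hm1' : m ≥ 1 := by omega
    have hk2 : k % 2 = r := by omega
    have hkd : k / 2 = m - 1 := by omega
    set U : List (Multiset ℕ) := if m % 2 = 0 then G m else (G m).reverse with hU
    set f : Multiset ℕ → Multiset ℕ := fun P => ones r + dbl P with hf
    set g : Multiset ℕ → Multiset ℕ := fun P => {1,1} + P with hg
    have hGdef : G (k+2) = U.map f ++ (G k).map g := by rw [G]
    have hUne : U ≠ [] := by
      rw [hU]
      split
      · exact hne_m
      · simpa using hne_m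
    have hUmem : ∀ P, P ∈ U ↔ P ∈ G m := by
      intro P
      rw [hU]
      split
      · exact Iff.rfl
      · exact List.mem_reverse
    have hUnd : U.Nodup := by
      rw [hU]; split
      · exact hnd_m
      · exact List.nodup_reverse.mpr hnd_m
    have hUch : U.Chain' ElementaryMove := by
      rw [hU]; split
      · exact hch_m
      · exact List.isChain_reverse.mpr (hch_m.imp fun a b h => em_symm h)
    have hfinj : Function.Injective f := by
      intro a b hab
      exact dbl_injective (add_left_cancel hab)
    have hginj : Function.Injective g := fun a b hab => add_left_cancel hab
    have hr1 : r ≤ 1 := by omega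
    -- counts
    have hcT : ∀ P ∈ U.map f, P.count 1 ≤ 1 := by
      intro P hP
      obtain ⟨Q, _, rfl⟩ := List.mem_map.mp hP
      simp only [hf, Multiset.count_add, count_one_ones, count_one_dbl]
      omega
    have hcS : ∀ P ∈ (G k).map g, 2 ≤ P.count 1 := by
      intro P hP
      obtain ⟨Q, _, rfl⟩ := List.mem_map.mp hP
      simp only [hg, Multiset.count_add, ones_two, count_one_ones]
      omega
    have hSne : (G k).map g ≠ [] := by simp [hne_k]
    have hTne : U.map f ≠ [] := by simp [hUne]
    refine ⟨?_, ?_, ?_, ?_, ?_, ?_⟩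
    · rw [hGdef]; simp [hUne]
    · -- getLast?
      rw [hGdef, List.getLast?_append]
      rw [List.getLast?_map, hlast_k]
      simp only [Option.map_some, hg]
      show some _ = _
      rw [show ({1,1} : Multiset ℕ) + ones k = ones (k+2) by
        rw [ones_two, ← ones_add, Nat.add_comm]]
    · -- membership
      intro P
      rw [hGdef, List.mem_append]
      constructor
      · rintro (hP | hP)
        · obtain ⟨Q, hQU, rfl⟩ := List.mem_map.mp hP
          obtain ⟨hQs, hQb⟩ := (hmem_m Q).mp ((hUmem Q).mp hQU)
          constructor
          · simp only [hf, Multiset.sum_add, sum_ones, dbl_sum, hQs]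
            omega
          · intro p hp
            rcases Multiset.mem_add.mp hp with h | h
            · exact ⟨0, by simpa [ones, Multiset.eq_of_mem_replicate h]⟩
            · obtain ⟨a, ha, rfl⟩ := Multiset.mem_map.mp h
              obtain ⟨j, rfl⟩ := hQb a ha
              exact ⟨j+1, by rw [pow_succ, mul_comm]⟩
        · obtain ⟨Q, hQk, rfl⟩ := List.mem_map.mp hP
          obtain ⟨hQs, hQb⟩ := (hmem_k Q).mp hQk
          constructor
          · simp only [hg, Multiset.sum_add, hQs, ones_two, sum_ones]
            omega
          · intro p hp
            rcases Multiset.mem_add.mp hp with h | h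
            · have : p = 1 := by simpa using h
              exact ⟨0, by simp [this]⟩
            · exact hQb p h
      · rintro ⟨hs, hb⟩
        obtain ⟨Q, hPQ, hQb, hsum⟩ := decomp P hb
        set c := P.count 1 with hc
        by_cases hcc : c ≤ 1
        · left
          have hcr : c = r := by omega
          have hQs : Q.sum = m := by omega
          have hQG : Q ∈ G m := (hmem_m Q).mpr ⟨hQs, hQb⟩
          refine List.mem_map.mpr ⟨Q, (hUmem Q).mpr hQG, ?_⟩
          simp only [hf]
          rw [← hcr]
          exact hPQ.symm
        · right
          have hc2 : 2 ≤ c := by omega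
          set y := ones (c - 2) + dbl Q with hy
          have hPy : P = {1,1} + y := by
            rw [hPQ, hy, ones_two, ← add_assoc, ← ones_add]
            congr 2
            omega
          have hyb : IsBinaryPartition y := by
            intro p hp
            rcases Multiset.mem_add.mp hp with h | h
            · exact ⟨0, by simpa [ones, Multiset.eq_of_mem_replicate h]⟩
            · refine hb p ?_
              rw [hPQ]
              exact Multiset.mem_add.mpr (Or.inr h)
          have hys : y.sum = k := by
            rw [hy, Multiset.sum_add, sum_ones, dbl_sum]
            omega
          exact List.mem_map.mpr ⟨y, (hmem_k y).mpr ⟨hys, hyb⟩, hPy.symm⟩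
    · -- nodup
      rw [hGdef]
      refine (hUnd.map hfinj).append (hnd_k.map hginj) ?_
      rw [List.disjoint_left]
      intro a haT haS
      have h1 := hcT a haT
      have h2 := hcS a haS
      omega
    · -- chain'
      rw [hGdef]
      refine List.IsChain.append ?_ ?_ ?_
      · exact (List.isChain_map f).mpr (hUch.imp fun a b h => em_add _ (em_dbl h))
      · exact (List.isChain_map g).mpr (hch_k.imp fun a b h => em_add _ h)
      · -- junction
        intro x hx y hy
        rw [List.getLast?_map] at hx
        rw [List.head?_map, hheadk] at hy
        simp only [Option.map_some, Option.mem_def, Option.some_inj] at hy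
        by_cases hpar : m % 2 = 0
        · -- U forward; last U = ones m ; k/2 = m-1 odd
          have hm1odd : ¬ ((m-1) % 2 = 0) := by omega
          rw [hkd, if_neg hm1odd, hlast_m1] at hifk
          have hkv : hk' = ones (m-1) := by
            injection hifk with h; exact h.symm
          have hxU : U.getLast? = some (ones m) := by
            rw [hU, if_pos hpar, hlast_m]
          rw [hxU] at hx
          simp only [Option.map_some, Option.mem_def, Option.some_inj] at hx
          rw [← hx, ← hy]
          simp only [hf, hg]
          rw [hkv, hk2]
          have e : dbl (ones m) = dbl (ones (m-1)) + {2} := by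
            rw [show ones m = ones (m-1) + {1} by
                rw [← ones_succ]; congr 1; omega,
              dbl_add, show dbl {1} = ({2} : Multiset ℕ) by simp [dbl]]
          rw [e]
          exact em_junction _ _
        · -- U reversed; last U = head (G m)
          have hm1even : (m-1) % 2 = 0 := by omega
          rw [hkd, if_pos hm1even, hheadm1] at hifk
          have hdiv : (m-1)/2 = m/2 := by omega
          have hkv : hk' = ones ((m-1) % 2) + dbl hm1 := by
            injection hifk with h; exact h.symm
          have hmm : hm = hm1 := by
            rw [hdiv] at hifm1
            rw [hifm1] at hifm
            injection hifm with h; exact h.symm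
          have hxU : U.getLast? = (G m).head? := by
            rw [hU, if_neg hpar, List.getLast?_reverse]
          rw [hxU, hheadm] at hx
          simp only [Option.map_some, Option.mem_def, Option.some_inj] at hx
          rw [← hx, ← hy]
          simp only [hf, hg]
          rw [hkv, hk2, ← hmm, hm1even, show (m % 2) = 1 by omega]
          rw [show ones 0 = (0 : Multiset ℕ) from rfl, zero_add]
          have e : dbl (ones 1 + dbl hm) = dbl (dbl hm) + {2} := by
            rw [dbl_add, show dbl (ones 1) = ({2} : Multiset ℕ) by simp [dbl, ones],
              add_comm]
          rw [e]
          exact em_junction _ _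
    · -- head invariant
      rw [hGdef, List.head?_append_of_ne_nil _ hTne, List.head?_map]
      by_cases hpar : m % 2 = 0
      · obtain ⟨h0, t0, hGm⟩ : ∃ h0 t0, G m = h0 :: t0 := by
          cases hGmm : G m with
          | nil => exact absurd hGmm hne_m
          | cons a t => exact ⟨a, t, rfl⟩
        refine ⟨h0, ?_, ?_⟩
        · rw [if_pos hpar, hGm]; rfl
        · rw [hU, if_pos hpar, hGm]; rfl
      · refine ⟨ones m, ?_, ?_⟩
        · rw [if_neg hpar, hlast_m]
        · rw [hU, if_neg hpar, List.head?_reverse, hlast_m]; rfl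

theorem gray_sequence_exists (n : ℕ) (hn : 0 < n) :
    ∃ L : List (Multiset ℕ),
      L.Nodup ∧
      (∀ P : Multiset ℕ, P ∈ L ↔ P.sum = n ∧ IsBinaryPartition P) ∧
      L.Chain' ElementaryMove := by
  obtain ⟨-, -, hmem, hnd, hch, -⟩ := G_spec n
  exact ⟨G n, hnd, hmem, hch⟩
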